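/- Let N ≥ 2 be an integer that is not prime, and let p be a prime number dividing N. If p ∈ {53, 157, 443, 467, 677}, then N is monomially reducible. -/

import Mathlib

namespace Monomial

/-- The elementary matrix `[[a, -1], [1, 0]]` over `ZMod N`. -/
def mat {N : ℕ} (a : ZMod N) : Matrix (Fin 2) (Fin 2) (ZMod N) := !![a, -1; 1, 0]

/-- `M [a₁, …, aₙ] = mat aₙ * ⋯ * mat a₁`. -/
def M {N : ℕ} (l : List (ZMod N)) : Matrix (Fin 2) (Fin 2) (ZMod N) :=
  (l.reverse.map mat).prod

/-- A tuple is a solution of (E_N) if the associated matrix is `±Id`. -/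
def IsSolution {N : ℕ} (l : List (ZMod N)) : Prop := M l = 1 ∨ M l = -1

/-- The sum `(a₁,…,aₙ) ⊕ (b₁,…,bₘ) = (a₁+bₘ, a₂,…,aₙ₋₁, aₙ+b₁, b₂,…,bₘ₋₁)`. -/
def osum {N : ℕ} (u v : List (ZMod N)) : List (ZMod N) :=
  (u.headI + v.getLastD 0) ::
    ((u.drop 1).dropLast ++ (u.getLastD 0 + v.headI) :: (v.drop 1).dropLast)

/-- Equivalence: `v` is a cyclic permutation of `u` or of the reversal of `u`. -/
def CyclicEquiv {N : ℕ} (u v : List (ZMod N)) : Prop :=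
  (∃ i, v = u.rotate i) ∨ (∃ i, v = u.reverse.rotate i)

/-- A tuple is reducible if, up to equivalence, it is a sum of an `m`-tuple (`m ≥ 3`)
with a solution of size `l ≥ 3`. -/
def Reducible {N : ℕ} (c : List (ZMod N)) : Prop :=
  ∃ a b : List (ZMod N), 3 ≤ a.length ∧ 3 ≤ b.length ∧ IsSolution b ∧
    CyclicEquiv c (osum a b)

/-- An irreducible solution: a solution which is not reducible (and `(0,0)` is
not considered irreducible). -/
def IrreducibleSol {N : ℕ} (c : List (ZMod N)) : Prop :=
  IsSolution c ∧ ¬ Reducible c ∧ c ≠ [0, 0]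

/-- The size of the `k`-monomial minimal solution of (E_N): the least `n > 0` such
that the constant `n`-tuple `(k, …, k)` is a solution. -/
noncomputable def monomialMinimalSize (N : ℕ) (k : ZMod N) : ℕ :=
  sInf {n | 0 < n ∧ IsSolution (List.replicate n k)}

/-- `N` is monomially irreducible if, for every `k ≠ 0`, the `k`-monomial minimal
solution of (E_N) is irreducible. -/
def MonomiallyIrreducible (N : ℕ) : Prop :=
  ∀ k : ZMod N, k ≠ 0 → IrreducibleSol (List.replicate (monomialMinimalSize N k) k)

/-- The continuant `Kₙ(x, …, x)` at a constant tuple: `K₀ = 1`, `K₁ = x`,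
`Kₙ₊₂ = x * Kₙ₊₁ - Kₙ`. -/
def K {N : ℕ} (x : ZMod N) : ℕ → ZMod N
  | 0 => 1
  | 1 => x
  | n + 2 => x * K x (n + 1) - K x n

variable {N : ℕ}
lemma K_zero (x : ZMod N) : K x 0 = 1 := rfl
lemma K_one' (x : ZMod N) : K x 1 = x := rfl
lemma K_step (x : ZMod N) (n : ℕ) : K x (n+2) = x * K x (n+1) - K x n := rfl
def Kp (x : ZMod N) : ℕ → ZMod N
  | 0 => 0
  | n+1 => K x n
lemma Kp_rel (x : ZMod N) (n : ℕ) : x * K x n - Kp x n = K x (n+1) := by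
  cases n with
  | zero => simp [K_zero, K_one', Kp]
  | succ n => rw [Kp, ← K_step]
lemma mat_pow (k : ZMod N) : ∀ n : ℕ, (mat k)^(n+1) = !![K k (n+1), -K k n; K k n, -Kp k n]
  | 0 => by
      rw [pow_one, mat]
      norm_num [K_zero, K_one', Kp]
  | n+1 => by
      rw [pow_succ', mat_pow k n, mat,
        show Kp k (n+1) = K k n from rfl]
      have h1 := Kp_rel k n
      have h2 : K k (n+1+1) = k * K k (n+1) - K k n := K_step k n
      ext i j
      fin_cases i <;> fin_cases j <;>
        simp [Matrix.mul_apply, Fin.sum_univ_two] <;>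
        first
          | linear_combination h2
          | linear_combination -h2
          | linear_combination -h1
          | ring
lemma M_replicate (k : ZMod N) (n : ℕ) : M (List.replicate n k) = (mat k)^n := by
  simp [M, List.reverse_replicate, List.map_replicate, List.prod_replicate]
lemma neg_one_fin_two : (-1 : Matrix (Fin 2) (Fin 2) (ZMod N)) = !![-1,0;0,-1] := by
  rw [Matrix.one_fin_two]; norm_num

lemma reducible_replicate (k : ZMod N) (i n : ℕ)
    (hσ : K k (i+1) = 1 ∨ K k (i+1) = -1) (hn : i + 4 ≤ n) :
    Reducible (List.replicate n k) := by
  set σ := K k (i+1) with hσdef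
  set c := K k i with hcdef
  set β := σ * c with hβdef
  set d := Kp k i with hddef
  have hσ2 : σ * σ = 1 := by rcases hσ with h | h <;> rw [h] <;> ring
  have hdet : σ * (-d) - (-c) * c = 1 := by
    have h1 : ((mat k)^(i+1)).det = 1 := by
      have hd : (mat k).det = 1 := by simp [mat, Matrix.det_fin_two_of]
      rw [Matrix.det_pow, hd, one_pow]
    rw [mat_pow, Matrix.det_fin_two_of] at h1
    exact h1
  have hMb : M (β :: (List.replicate (i+1) k ++ [β])) = !![-σ, 0; 0, -σ] := by
    rw [M]
    simp only [List.reverse_cons, List.reverse_append, List.reverse_replicate,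
      List.reverse_singleton, List.map_append, List.map_cons, List.map_replicate,
      List.map_nil, List.prod_append, List.prod_cons, List.prod_nil,
      List.prod_replicate, List.singleton_append, List.cons_append, List.nil_append]
    rw [mat_pow k i, mat]
    ext a b
    fin_cases a <;> fin_cases b <;>
      simp [Matrix.mul_apply, Fin.sum_univ_two] <;>
      first
        | linear_combination (σ*c*c - d) * hσ2 - σ * hdet
        | linear_combination (-c) * hσ2
        | linear_combination c * hσ2
        | ring
  refine ⟨(k - β) :: (List.replicate (n-i-3) k ++ [k-β]),
          β :: (List.replicate (i+1) k ++ [β]), ?_, ?_, ?_, ?_⟩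
  · simp; omega
  · simp
  · rw [IsSolution, hMb]
    rcases hσ with h | h
    · right; rw [neg_one_fin_two]
      simp only [hσdef] at h ⊢
      rw [h]
    · left; rw [Matrix.one_fin_two]
      simp only [hσdef] at h ⊢
      rw [h]; norm_num
  · left
    refine ⟨0, ?_⟩
    rw [List.rotate_zero]
    rw [osum]
    simp only [List.headI_cons, List.getLastD_cons, List.getLastD_concat,
      List.drop_succ_cons, List.drop_zero, List.dropLast_concat]
    rw [sub_add_cancel]
    rw [List.eq_replicate_iff]
    constructor
    · simp; omega
    · intro b hb
      simp only [List.mem_cons, List.mem_append, List.mem_replicate] at hb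
      rcases hb with h | h | h | h <;> tauto

lemma map_K {q : ℕ} (f : ZMod N →+* ZMod q) (k : ZMod N) (n : ℕ) :
    f (K k n) = K (f k) n := by
  induction n using Nat.strong_induction_on with
  | _ n ih =>
    match n with
    | 0 => simp [K_zero]
    | 1 => simp [K_one']
    | (m+2) =>
      rw [K_step, map_sub, map_mul, ih (m+1) (by omega), ih m (by omega), K_step]

lemma K_periodic (x : ZMod N) (r : ℕ) (h0 : K x (r+1) = 0) (h1 : K x (r+2) = 1) :
    ∀ n, K x (n + (r+2)) = K x n := by
  have H : ∀ n, K x (n + (r+2)) = K x n ∧ K x (n + (r+2) + 1) = K x (n+1) := by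
    intro n
    induction n with
    | zero =>
      refine ⟨by simpa [K_zero] using h1, ?_⟩
      have hs : K x (r+2+1) = x * K x (r+2) - K x (r+1) := K_step x (r+1)
      simp only [Nat.zero_add]
      rw [hs, h0, h1, mul_one, sub_zero, K_one']
    | succ n ih =>
      constructor
      · rw [show n+1+(r+2) = n+(r+2)+1 by omega]; exact ih.2
      · rw [show n+1+(r+2)+1 = (n+(r+2))+2 by omega, K_step, ih.2, ih.1]
        exact (K_step x n).symm
  exact fun n => (H n).1

lemma K_periodic_mul (x : ZMod N) (r : ℕ) (h0 : K x (r+1) = 0) (h1 : K x (r+2) = 1) :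
    ∀ t n, K x (n + (r+2)*t) = K x n := by
  intro t
  induction t with
  | zero => simp
  | succ t ih =>
    intro n
    rw [show n + (r+2)*(t+1) = (n + (r+2)*t) + (r+2) by ring,
      K_periodic x r h0 h1, ih]

lemma isSolution_replicate_iff (k : ZMod N) (n : ℕ) :
    IsSolution (List.replicate (n+1) k) ↔
      (K k n = 0 ∧ (K k (n+1) = 1 ∨ K k (n+1) = -1)) := by
  rw [IsSolution, M_replicate, mat_pow, neg_one_fin_two, Matrix.one_fin_two]
  constructor
  · rintro (hEq | hEq)
    · have h00 := congrFun (congrFun hEq 0) 0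
      have h10 := congrFun (congrFun hEq 1) 0
      simp at h00 h10
      exact ⟨h10, Or.inl h00⟩
    · have h00 := congrFun (congrFun hEq 0) 0
      have h10 := congrFun (congrFun hEq 1) 0
      simp at h00 h10
      exact ⟨h10, Or.inr (by linear_combination h00)⟩
  · rintro ⟨h0, h1 | h1⟩
    · left
      have hp : Kp k n = -1 := by linear_combination k * h0 - h1 - Kp_rel k n
      rw [h0, h1, hp]; norm_num
    · right
      have hp : Kp k n = 1 := by linear_combination k * h0 - h1 - Kp_rel k n
      rw [h0, h1, hp]; norm_num

lemma isSolution_replicate_iff' (k : ZMod N) (n : ℕ) (hn : n ≠ 0) :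
    IsSolution (List.replicate n k) ↔
      (K k (n-1) = 0 ∧ (K k n = 1 ∨ K k n = -1)) := by
  obtain ⟨m, rfl⟩ : ∃ m, n = m + 1 := ⟨n - 1, by omega⟩
  simpa using isSolution_replicate_iff k m

/-- the pattern of K when k*k = 0 -/
lemma K_sq_zero (k : ZMod N) (hkk : k * k = 0) :
    ∀ i : ℕ, K k (2*i) = (-1)^i ∧ K k (2*i+1) = (-1)^i * ((i+1 : ℕ) : ZMod N) * k := by
  intro i
  induction i with
  | zero => simp [K_zero, K_one']
  | succ i ih =>
    have e0 : K k (2*(i+1)) = k * K k (2*i+1) - K k (2*i) := by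
      rw [show 2*(i+1) = (2*i)+2 by ring]; exact K_step k (2*i)
    have e1 : K k (2*(i+1)+1) = k * K k (2*(i+1)) - K k (2*i+1) := by
      have := K_step k (2*i+1)
      rw [show (2*i+1)+2 = 2*(i+1)+1 by ring, show (2*i+1)+1 = 2*(i+1) by ring] at this
      exact this
    constructor
    · rw [e0, ih.1, ih.2]
      push_cast
      ring_nf
      linear_combination ((i:ZMod N)+1) * (-1:ZMod N)^i * hkk
    · rw [e1, e0, ih.1, ih.2]
      push_cast
      ring_nf
      linear_combination ((i:ZMod N)+1) * (-1:ZMod N)^i * k * hkk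

lemma caseA (N p r : ℕ) (hN : 2 ≤ N) (hNp : N = p * p * r) (hp3 : 3 ≤ p) (hr : 1 ≤ r) :
    ¬ MonomiallyIrreducible N := by
  haveI : NeZero N := ⟨by omega⟩
  haveI : Fact (1 < N) := ⟨by omega⟩
  set k : ZMod N := ((p * r : ℕ) : ZMod N) with hk
  have hkk : k * k = 0 := by
    rw [hk, ← Nat.cast_mul, show (p*r)*(p*r) = N * r by rw [hNp]; ring,
      Nat.cast_mul, ZMod.natCast_self, zero_mul]
  have hk0 : k ≠ 0 := by
    rw [hk, Ne, ZMod.natCast_eq_zero_iff]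
    intro hdvd
    have := Nat.le_of_dvd (by positivity) hdvd
    nlinarith
  have h2k : (2 : ZMod N) * k ≠ 0 := by
    rw [hk, show (2 : ZMod N) * ((p*r:ℕ):ZMod N) = ((2*(p*r) : ℕ) : ZMod N) by push_cast; ring,
      Ne, ZMod.natCast_eq_zero_iff]
    intro hdvd
    have := Nat.le_of_dvd (by positivity) hdvd
    nlinarith
  have hK2 : K k 2 = -1 := by
    have h := K_step k 0
    rw [K_one', K_zero] at h
    rw [h, hkk]; ring
  have hK3 : K k 3 = -(2 * k) := by
    have h := K_step k 1
    rw [K_one'] at h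
    rw [h, hK2]; ring
  have hsol : IsSolution (List.replicate (2*p) k) := by
    rw [isSolution_replicate_iff' k (2*p) (by omega)]
    have h1 := (K_sq_zero k hkk (p-1)).2
    have h2 := (K_sq_zero k hkk p).1
    constructor
    · rw [show 2*p - 1 = 2*(p-1)+1 by omega, h1, show (p-1)+1 = p by omega]
      have hz : ((p : ℕ) : ZMod N) * k = 0 := by
        rw [hk, ← Nat.cast_mul, show p * (p*r) = N by rw [hNp]; ring, ZMod.natCast_self]
      rw [mul_assoc, hz, mul_zero]
    · rw [h2]
      rcases Nat.even_or_odd p with he | ho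
      · left; exact he.neg_one_pow
      · right; exact ho.neg_one_pow
  set nn := monomialMinimalSize N k with hnn
  clear_value nn
  have hmem : 0 < nn ∧ IsSolution (List.replicate nn k) := by
    rw [hnn, monomialMinimalSize]
    have hne : {n | 0 < n ∧ IsSolution (List.replicate n k)}.Nonempty :=
      ⟨2*p, by refine ⟨by omega, hsol⟩⟩
    exact Nat.sInf_mem hne
  have h5 : 5 ≤ nn := by
    rcases hmem with ⟨hpos, hsoln⟩
    by_contra hlt
    push_neg at hlt
    interval_cases nn
    · have h := (isSolution_replicate_iff' k 1 one_ne_zero).1 hsoln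
      rw [show (1:ℕ)-1 = 0 from rfl, K_zero] at h
      exact one_ne_zero h.1
    · have h := (isSolution_replicate_iff' k 2 (by omega)).1 hsoln
      rw [show (2:ℕ)-1 = 1 from rfl, K_one'] at h
      exact hk0 h.1
    · have h := (isSolution_replicate_iff' k 3 (by omega)).1 hsoln
      rw [show (3:ℕ)-1 = 2 from rfl, hK2] at h
      exact one_ne_zero (show (1:ZMod N) = 0 by linear_combination -h.1)
    · have h := (isSolution_replicate_iff' k 4 (by omega)).1 hsoln
      rw [show (4:ℕ)-1 = 3 from rfl, hK3] at h
      exact h2k (by linear_combination -h.1)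
  intro hMI
  obtain ⟨_, hnred, _⟩ := hMI k hk0
  rw [← hnn] at hnred
  exact hnred (reducible_replicate k 1 nn (Or.inr hK2) (by omega))


lemma caseB (N p m : ℕ) (hN : 2 ≤ N) (hNpm : N = p * m) (hp2 : 2 ≤ p) (hm2 : 2 ≤ m)
    (hco : Nat.Coprime p m) (s : ZMod p)
    (hd2 : K s 2 ≠ 0) (hd5 : K s 5 ≠ 0) (hd8 : K s 8 ≠ 0) (hd11 : K s 11 ≠ 0)
    (hd14 : K s 14 ≠ 0) (h12 : K s 12 = 0) (h13 : K s 13 = 1) :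
    ¬ MonomiallyIrreducible N := by
  haveI : NeZero N := ⟨by omega⟩
  haveI : NeZero p := ⟨by omega⟩
  haveI : NeZero m := ⟨by omega⟩
  haveI : Fact (1 < m) := ⟨by omega⟩
  haveI : Fact (1 < p) := ⟨by omega⟩
  obtain ⟨c, hcp, hcm⟩ := Nat.chineseRemainder hco s.val 1
  set k : ZMod N := (c : ZMod N) with hk
  have hpN : p ∣ N := hNpm ▸ dvd_mul_right p m
  have hmN : m ∣ N := hNpm ▸ dvd_mul_left m p
  set fp := ZMod.castHom hpN (ZMod p) with hfp
  set fm := ZMod.castHom hmN (ZMod m) with hfm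
  have hfpk : fp k = s := by
    rw [hk, map_natCast, (ZMod.natCast_eq_natCast_iff _ _ _).mpr hcp, ZMod.natCast_zmod_val]
  have hfmk : fm k = 1 := by
    rw [hk, map_natCast, (ZMod.natCast_eq_natCast_iff _ _ _).mpr hcm, Nat.cast_one]
  have hk0 : k ≠ 0 := fun h => by
    rw [h, map_zero] at hfmk; exact one_ne_zero hfmk.symm
  have hinj : ∀ x : ZMod N, fp x = 0 → fm x = 0 → x = 0 := by
    intro x hxp hxm
    have hx : x = ((x.val : ℕ) : ZMod N) := (ZMod.natCast_zmod_val x).symm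
    rw [hx, map_natCast] at hxp hxm
    rw [ZMod.natCast_eq_zero_iff] at hxp hxm
    have hNv : N ∣ x.val := by
      have h' : p * m ∣ x.val := Nat.Coprime.mul_dvd_of_dvd_of_dvd hco hxp hxm
      exact hNpm.symm ▸ h' 
    rw [hx, ZMod.natCast_eq_zero_iff]
    exact hNv
  have heq : ∀ x y : ZMod N, fp x = fp y → fm x = fm y → x = y := by
    intro x y hxp hxm
    have h0 := hinj (x - y) (by rw [map_sub, hxp, sub_self]) (by rw [map_sub, hxm, sub_self])
    exact sub_eq_zero.mp h0
  have hKp : ∀ n, fp (K k n) = K s n := fun n => by rw [map_K, hfpk]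
  have hKm : ∀ n, fm (K k n) = K (1 : ZMod m) n := fun n => by rw [map_K, hfmk]
  -- values of K (1 : ZMod m)
  have c2 : K (1:ZMod m) 2 = 0 := by
    have h := K_step (1:ZMod m) 0
    norm_num [K_zero, K_one'] at h
    exact h
  have c3 : K (1:ZMod m) 3 = -1 := by
    have h := K_step (1:ZMod m) 1
    norm_num [K_one', c2] at h
    exact h
  have c4 : K (1:ZMod m) 4 = -1 := by
    have h := K_step (1:ZMod m) 2
    norm_num [c2, c3] at h
    exact h
  have c5 : K (1:ZMod m) 5 = 0 := by
    have h := K_step (1:ZMod m) 3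
    norm_num [c3, c4] at h
    linear_combination h
  have c6 : K (1:ZMod m) 6 = 1 := by
    have h := K_step (1:ZMod m) 4
    norm_num [c4, c5] at h
    linear_combination h
  have per6 := K_periodic_mul (1:ZMod m) 4 c5 c6
  have cval : ∀ t r : ℕ, K (1:ZMod m) (r + 6*t) = K (1:ZMod m) r := fun t r => per6 t r
  have c7 : K (1:ZMod m) 7 = 1 := by
    have h := cval 1 1; norm_num at h; rw [h, K_one']
  have c9 : K (1:ZMod m) 9 = -1 := by
    have h := cval 1 3; norm_num at h; rw [h, c3]
  have c10 : K (1:ZMod m) 10 = -1 := by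
    have h := cval 1 4; norm_num at h; rw [h, c4]
  have c12 : K (1:ZMod m) 12 = 1 := by
    have h := cval 2 0; norm_num at h; rw [h, K_zero]
  have c13 : K (1:ZMod m) 13 = 1 := by
    have h := cval 2 1; norm_num at h; rw [h, K_one']
  have c77 : K (1:ZMod m) 77 = 0 := by
    have h := cval 12 5; norm_num at h; rw [h, c5]
  have c78 : K (1:ZMod m) 78 = 1 := by
    have h := cval 13 0; norm_num at h; rw [h, K_zero]
  -- values of K s via periodicity
  have perp := K_periodic_mul s 11 h12 h13
  have p77 : K s 77 = 0 := by
    have h := perp 5 12; norm_num at h; rw [h, h12]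
  have p78 : K s 78 = 1 := by
    have h := perp 6 0; norm_num at h; rw [h, K_zero]
  -- global K values
  have hK13 : K k 13 = 1 := by
    refine heq _ 1 ?_ ?_
    · rw [hKp 13, h13, map_one]
    · rw [hKm 13, c13, map_one]
  have hK77 : K k 77 = 0 := by
    refine hinj _ ?_ ?_
    · rw [hKp 77, p77]
    · rw [hKm 77, c77]
  have hK78 : K k 78 = 1 := by
    refine heq _ 1 ?_ ?_
    · rw [hKp 78, p78, map_one]
    · rw [hKm 78, c78, map_one]
  have hsol : IsSolution (List.replicate 78 k) := by
    rw [isSolution_replicate_iff' k 78 (by norm_num)]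
    norm_num [hK77, hK78]
  -- nonzero transports
  have hmne : ∀ d : ℕ, K (1:ZMod m) d ≠ 0 → K k d ≠ 0 := fun d hd h => hd (by
    rw [← hKm, h, map_zero])
  have hpne : ∀ d : ℕ, K s d ≠ 0 → K k d ≠ 0 := fun d hd h => hd (by
    rw [← hKp, h, map_zero])
  set nn := monomialMinimalSize N k with hnn
  clear_value nn
  have hmem : 0 < nn ∧ IsSolution (List.replicate nn k) := by
    rw [hnn, monomialMinimalSize]
    have hne : {n | 0 < n ∧ IsSolution (List.replicate n k)}.Nonempty :=
      ⟨78, by refine ⟨by omega, hsol⟩⟩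
    exact Nat.sInf_mem hne
  have h16 : 16 ≤ nn := by
    rcases hmem with ⟨hpos, hsoln⟩
    by_contra hlt
    push_neg at hlt
    have hcontra : ∀ d : ℕ, K k d ≠ 0 → ¬ IsSolution (List.replicate (d+1) k) := by
      intro d hd hs
      exact hd ((isSolution_replicate_iff k d).1 hs).1
    interval_cases nn
    · exact hcontra 0 (hmne 0 (by rw [K_zero]; exact one_ne_zero)) hsoln
    · exact hcontra 1 (hmne 1 (by rw [K_one']; exact one_ne_zero)) hsoln
    · exact hcontra 2 (hpne 2 hd2) hsoln
    · exact hcontra 3 (hmne 3 (by rw [c3]; exact neg_ne_zero.mpr one_ne_zero)) hsoln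
    · exact hcontra 4 (hmne 4 (by rw [c4]; exact neg_ne_zero.mpr one_ne_zero)) hsoln
    · exact hcontra 5 (hpne 5 hd5) hsoln
    · exact hcontra 6 (hmne 6 (by rw [c6]; exact one_ne_zero)) hsoln
    · exact hcontra 7 (hmne 7 (by rw [c7]; exact one_ne_zero)) hsoln
    · exact hcontra 8 (hpne 8 hd8) hsoln
    · exact hcontra 9 (hmne 9 (by rw [c9]; exact neg_ne_zero.mpr one_ne_zero)) hsoln
    · exact hcontra 10 (hmne 10 (by rw [c10]; exact neg_ne_zero.mpr one_ne_zero)) hsoln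
    · exact hcontra 11 (hpne 11 hd11) hsoln
    · exact hcontra 12 (hmne 12 (by rw [c12]; exact one_ne_zero)) hsoln
    · exact hcontra 13 (hmne 13 (by rw [c13]; exact one_ne_zero)) hsoln
    · exact hcontra 14 (hpne 14 hd14) hsoln
  intro hMI
  obtain ⟨_, hnred, _⟩ := hMI k hk0
  rw [← hnn] at hnred
  exact hnred (reducible_replicate k 12 nn (Or.inl hK13) (by omega))


theorem stmt11 (N p : ℕ) (hN : 2 ≤ N) (hnp : ¬ N.Prime) (hp : p.Prime)
    (hdvd : p ∣ N) (h : p ∈ ({53, 157, 443, 467, 677} : Set ℕ)) :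
    ¬ MonomiallyIrreducible N := by
  obtain ⟨m, hm⟩ := hdvd
  have hp2 : 2 ≤ p := hp.two_le
  have hm0 : m ≠ 0 := by rintro rfl; omega
  have hm1 : m ≠ 1 := by
    rintro rfl
    rw [mul_one] at hm
    exact hnp (hm ▸ hp)
  have hm2 : 2 ≤ m := by omega
  by_cases hpm : p ∣ m
  · obtain ⟨r, hr⟩ := hpm
    have hr1 : 1 ≤ r := by
      rcases Nat.eq_zero_or_pos r with rfl | hpos
      · exact absurd (by rw [hr]; ring) hm0
      · omega
    have hp3 : 3 ≤ p := by
      simp only [Set.mem_insert_iff, Set.mem_singleton_iff] at h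
      rcases h with rfl | rfl | rfl | rfl | rfl <;> norm_num
    exact caseA N p r hN (by rw [hm, hr]; ring) hp3 hr1
  · have hco : Nat.Coprime p m := (Nat.Prime.coprime_iff_not_dvd hp).mpr hpm
    simp only [Set.mem_insert_iff, Set.mem_singleton_iff] at h
    rcases h with rfl | rfl | rfl | rfl | rfl
    · exact caseB N 53 m hN hm hp2 hm2 hco 8 (by decide) (by decide) (by decide)
        (by decide) (by decide) (by decide) (by decide)
    · exact caseB N 157 m hN hm hp2 hm2 hco 35 (by decide) (by decide) (by decide)
        (by decide) (by decide) (by decide) (by decide)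
    · exact caseB N 443 m hN hm hp2 hm2 hco 11 (by decide) (by decide) (by decide)
        (by decide) (by decide) (by decide) (by decide)
    · exact caseB N 467 m hN hm hp2 hm2 hco 21 (by decide) (by decide) (by decide)
        (by decide) (by decide) (by decide) (by decide)
    · exact caseB N 677 m hN hm hp2 hm2 hco 124 (by decide) (by decide) (by decide)
        (by decide) (by decide) (by decide) (by decide)


end Monomial
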